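/- For x_N(s) = μ_{n,N} + s σ_{n,N} and ξ = x_N(s)/κ_N, where κ_N = (n+N+1)/2, σ_{n,N}³ satisfies κ_N/σ_{n,N}³ = (ξ₊ − ξ₋)/(4ξ₊²); consequently for any fixed r > 0 and s ≥ r², one has σ_{n,N} √f(ξ) ≥ r ξ₊/ξ = r μ_{n,N}/(μ_{n,N} + s σ_{n,N}), where f(ξ) = (ξ−ξ₊)(ξ−ξ₋)/(4ξ²). -/

import Mathlib

open Real

set_option maxHeartbeats 1000000 in
/-- Growth of `√f` past the upper turning point: with `κ_N = (n+N+1)/2`,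
`ξ_± = 2 ± √(4−ω_N²)`, `f(ξ) = (ξ−ξ₊)(ξ−ξ₋)/(4ξ²)`, `μ_{n,N} = κ_N ξ₊` and
`σ_{n,N}³ = 4ξ₊²κ_N/(ξ₊−ξ₋)`, one has `κ_N/σ_{n,N}³ = (ξ₊−ξ₋)/(4ξ₊²)`, and for every
fixed `r > 0` and `s ≥ r²`, `σ_{n,N}√f(ξ) ≥ r ξ₊/ξ = r μ_{n,N}/(μ_{n,N}+sσ_{n,N})`,
where `ξ = (μ_{n,N}+sσ_{n,N})/κ_N`. -/
theorem sqrt_f_lower_bound (n N : ℕ) (hN : 0 < N) (hn : N < n) :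
    let κ : ℝ := ((n : ℝ) + N + 1) / 2
    let ω : ℝ := 2 * ((n : ℝ) - N) / ((n : ℝ) + N + 1)
    let ξp : ℝ := 2 + Real.sqrt (4 - ω ^ 2)
    let ξm : ℝ := 2 - Real.sqrt (4 - ω ^ 2)
    let f : ℝ → ℝ := fun ξ => (ξ - ξp) * (ξ - ξm) / (4 * ξ ^ 2)
    let μ : ℝ := κ * ξp
    let σ : ℝ := (4 * ξp ^ 2 * κ / (ξp - ξm)) ^ ((1 : ℝ) / 3)
    κ / σ ^ 3 = (ξp - ξm) / (4 * ξp ^ 2) ∧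
      ∀ r : ℝ, 0 < r → ∀ s : ℝ, r ^ 2 ≤ s →
        r * ξp / ((μ + s * σ) / κ) = r * μ / (μ + s * σ) ∧
        r * μ / (μ + s * σ) ≤ σ * Real.sqrt (f ((μ + s * σ) / κ)) := by
  intro κ ω ξp ξm f μ σ
  have hf : ∀ x : ℝ, f x = (x - ξp) * (x - ξm) / (4 * x ^ 2) := fun x => rfl
  have hκv : κ = ((n : ℝ) + N + 1) / 2 := rfl
  have hωv : ω = 2 * ((n : ℝ) - N) / ((n : ℝ) + N + 1) := rfl
  have hξpv : ξp = 2 + Real.sqrt (4 - ω ^ 2) := rfl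
  have hξmv : ξm = 2 - Real.sqrt (4 - ω ^ 2) := rfl
  have hμv : μ = κ * ξp := rfl
  have hσv : σ = (4 * ξp ^ 2 * κ / (ξp - ξm)) ^ ((1 : ℝ) / 3) := rfl
  clear_value κ ω ξp ξm f μ σ
  have hnN : (N : ℝ) < n := by exact_mod_cast hn
  have hN0 : (0 : ℝ) < N := by exact_mod_cast hN
  have hden0 : (0 : ℝ) < (n : ℝ) + N + 1 := by linarith
  have hκ : 0 < κ := by rw [hκv]; positivity
  have hω0 : 0 < ω := by rw [hωv]; apply div_pos _ hden0; linarith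
  have hω2 : ω < 2 := by rw [hωv, div_lt_iff₀ hden0]; linarith
  have h4 : 0 < 4 - ω ^ 2 := by nlinarith
  have hsqpos : 0 < Real.sqrt (4 - ω ^ 2) := Real.sqrt_pos.mpr h4
  have hsq2 : Real.sqrt (4 - ω ^ 2) < 2 := by
    rw [show (2 : ℝ) = Real.sqrt 4 by
      rw [show (4 : ℝ) = 2 ^ 2 by norm_num, Real.sqrt_sq (by norm_num)]]
    exact Real.sqrt_lt_sqrt h4.le (by nlinarith)
  have hξp2 : 2 < ξp := by rw [hξpv]; linarith
  have hξppos : 0 < ξp := by linarith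
  have hdiff : ξp - ξm = 2 * Real.sqrt (4 - ω ^ 2) := by rw [hξpv, hξmv]; ring
  have hdpos : 0 < ξp - ξm := by rw [hdiff]; positivity
  have hbase : 0 < 4 * ξp ^ 2 * κ / (ξp - ξm) := by positivity
  have hσpos : 0 < σ := hσv ▸ Real.rpow_pos_of_pos hbase _
  have hσ3 : σ ^ 3 = 4 * ξp ^ 2 * κ / (ξp - ξm) := by
    rw [hσv, ← Real.rpow_natCast _ 3, ← Real.rpow_mul hbase.le]
    norm_num
  refine ⟨by rw [hσ3]; field_simp, ?_⟩
  intro r hr s hs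
  have hspos : 0 < s := lt_of_lt_of_le (by positivity) hs
  have hdenpos : 0 < μ + s * σ := by rw [hμv]; positivity
  set ξ : ℝ := (μ + s * σ) / κ with hξdef
  have hξpos : 0 < ξ := div_pos hdenpos hκ
  have hξsub : ξ - ξp = s * σ / κ := by rw [hξdef, hμv]; field_simp; ring
  have hξgtp : ξp < ξ := by
    rw [← sub_pos, hξsub]; positivity
  have hξgtm : ξm < ξ := by linarith
  clear_value ξ
  have eq1 : r * ξp / ξ = r * μ / (μ + s * σ) := by
    rw [hξdef, hμv]; field_simp
  refine ⟨eq1, ?_⟩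
  rw [← eq1]
  have key : 4 * (r * ξp) ^ 2 ≤ σ ^ 2 * ((ξ - ξp) * (ξ - ξm)) := by
    have h1 : σ ^ 2 * ((ξ - ξp) * (ξ - ξm)) = s * σ ^ 3 / κ * (ξ - ξm) := by
      rw [hξsub]; ring
    rw [h1, hσ3]
    have h2 : s * (4 * ξp ^ 2 * κ / (ξp - ξm)) / κ * (ξ - ξm)
        = 4 * ξp ^ 2 * s * ((ξ - ξm) / (ξp - ξm)) := by
      field_simp
    rw [h2]
    have h4' : (1 : ℝ) ≤ (ξ - ξm) / (ξp - ξm) := by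
      rw [le_div_iff₀ hdpos]; linarith
    have h5 : 4 * (r * ξp) ^ 2 ≤ 4 * ξp ^ 2 * s := by nlinarith
    have h6 : 4 * ξp ^ 2 * s * 1 ≤ 4 * ξp ^ 2 * s * ((ξ - ξm) / (ξp - ξm)) := by
      apply mul_le_mul_of_nonneg_left h4' (by positivity)
    linarith
  have hrw : σ * Real.sqrt (f ξ) = Real.sqrt (σ ^ 2 * f ξ) := by
    rw [Real.sqrt_mul (sq_nonneg σ), Real.sqrt_sq hσpos.le]
  rw [hrw, hf ξ]
  apply Real.le_sqrt_of_sq_le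
  have e1 : (r * ξp / ξ) ^ 2 = 4 * (r * ξp) ^ 2 / (4 * ξ ^ 2) := by
    field_simp
  have e2 : σ ^ 2 * ((ξ - ξp) * (ξ - ξm) / (4 * ξ ^ 2))
      = σ ^ 2 * ((ξ - ξp) * (ξ - ξm)) / (4 * ξ ^ 2) := by ring
  rw [e1, e2]
  gcongr
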